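/- Let Q be a finite (left) quasifield with q elements, let d ≥ 1 be an integer, let γ ∈ Q, and let M be the adjacency matrix of the product graph DP_Q(d,γ). If v is an eigenvector of M with eigenvalue λ such that v is orthogonal to both χ_X + χ_Y and χ_X − χ_Y (where χ_X, χ_Y are the characteristic vectors of the two parts X and Y), then λ³ = q^d·λ; in particular |λ| ≤ q^{d/2}. -/

import Mathlib

/-- A finite (left) quasifield. -/
class Quasifield (Q : Type*) extends AddCommGroup Q, Mul Q, One Q where
  one_ne_zero : (1 : Q) ≠ 0
  one_mul : ∀ a : Q, 1 * a = a
  mul_one : ∀ a : Q, a * 1 = a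
  zero_mul : ∀ a : Q, 0 * a = 0
  mul_zero : ∀ a : Q, a * 0 = 0
  mul_ne_zero : ∀ a b : Q, a ≠ 0 → b ≠ 0 → a * b ≠ 0
  existsUnique_mul_left : ∀ a b : Q, a ≠ 0 → b ≠ 0 → ∃! x : Q, a * x = b
  existsUnique_mul_right : ∀ a b : Q, a ≠ 0 → b ≠ 0 → ∃! y : Q, y * a = b
  left_distrib : ∀ a b c : Q, a * (b + c) = a * b + a * c
  existsUnique_affine : ∀ a b c : Q, a ≠ b → ∃! x : Q, a * x = b * x + c

/-- The kernel of a quasifield. -/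
def Quasifield.kernel (Q : Type*) [Quasifield Q] : Set Q :=
  {k | (∀ x y : Q, (x + y) * k = x * k + y * k) ∧ ∀ x y : Q, (x * y) * k = x * (y * k)}

open Matrix

/-- The adjacency relation of the product graph `DP_Q(d,γ)`:
`x ∈ X = Q^{d+1}` is adjacent to `y ∈ Y = Q^{d+1}` iff
`x_{d+1} + γ = x₁·y₁ + ⋯ + x_d·y_d + y_{d+1}`. -/
def DPAdj {Q : Type*} [Quasifield Q] (d : ℕ) (γ : Q) (x y : Fin (d + 1) → Q) : Prop :=
  x (Fin.last d) + γ = (∑ i : Fin d, x i.castSucc * y i.castSucc) + y (Fin.last d)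

open scoped Classical in
/-- The `X × Y` block `N` of the adjacency matrix of `DP_Q(d,γ)`. -/
noncomputable def DPBlock (Q : Type*) [Quasifield Q] [Fintype Q] (d : ℕ) (γ : Q) :
    Matrix (Fin (d + 1) → Q) (Fin (d + 1) → Q) ℝ :=
  Matrix.of fun x y => if DPAdj d γ x y then 1 else 0

section Helpers
variable {Q : Type*} [Quasifield Q] [Fintype Q] [DecidableEq Q]
open Finset

lemma qf_mul_sub (a b c : Q) : a * (b - c) = a * b - a * c := by
  have h := Quasifield.left_distrib a (b - c) c
  rw [sub_add_cancel] at h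
  exact eq_sub_of_add_eq h.symm

lemma qf_existsUnique_right (a : Q) (ha : a ≠ 0) (b : Q) : ∃! x : Q, x * a = b := by
  by_cases hb : b = 0
  · subst hb
    exact ⟨0, Quasifield.zero_mul a, fun y hy => by
      by_contra hy0; exact Quasifield.mul_ne_zero y a hy0 ha hy⟩
  · exact Quasifield.existsUnique_mul_right a b ha hb

lemma sum_ite_of_existsUnique {α : Type*} [Fintype α] [DecidableEq α] (P : α → Prop)
    [DecidablePred P] (h : ∃! s, P s) : ∑ s : α, (if P s then (1:ℝ) else 0) = 1 := by
  obtain ⟨s₀, hs₀, hu⟩ := h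
  have hP : ∀ s, P s ↔ s = s₀ := fun s => ⟨fun hs => hu s hs, fun hs => hs ▸ hs₀⟩
  simp only [hP]
  simp

def snocEquiv (Q : Type*) (d : ℕ) : ((Fin d → Q) × Q) ≃ (Fin (d+1) → Q) where
  toFun p := Fin.snoc p.1 p.2
  invFun y := (Fin.init y, y (Fin.last d))
  left_inv p := by
    refine Prod.ext ?_ ?_ <;> simp
  right_inv y := by simp

lemma sum_snoc {d : ℕ} (f : (Fin (d+1) → Q) → ℝ) :
    ∑ y : Fin (d+1) → Q, f y = ∑ w : Fin d → Q, ∑ t : Q, f (Fin.snoc w t) := by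
  rw [← (snocEquiv Q d).sum_comp f, Fintype.sum_prod_type]
  rfl

def splitEquiv {d : ℕ} (Q : Type*) (i₀ : Fin d) :
    (Q × ({j : Fin d // j ≠ i₀} → Q)) ≃ (Fin d → Q) where
  toFun p j := if h : j = i₀ then p.1 else p.2 ⟨j, h⟩
  invFun w := (w i₀, fun j => w j.1)
  left_inv p := by
    refine Prod.ext ?_ ?_
    · simp
    · funext j
      simp [dif_neg j.2]
  right_inv w := by
    funext j
    by_cases h : j = i₀ <;> simp [h]

lemma sum_split {d : ℕ} {M : Type*} [AddCommMonoid M] (i₀ : Fin d) (g : Fin d → M) :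
    ∑ i, g i = g i₀ + ∑ j : {j : Fin d // j ≠ i₀}, g j.1 := by
  rw [Fintype.sum_eq_add_sum_compl i₀ g]
  congr 1
  rw [← Finset.sum_subtype (Finset.univ.filter (· ≠ i₀)) (by simp) (fun j => g j)]
  congr 1
  ext j
  simp

set_option linter.unusedSectionVars false

lemma count_core {d : ℕ} (i₀ : Fin d) (F G : Fin d → Q → Q) (c : Q)
    (h : ∀ c' : Q, ∃! s : Q, F i₀ s = G i₀ s + c') :
    ∑ w : Fin d → Q, (if (∑ i, F i (w i)) = (∑ i, G i (w i)) + c then (1:ℝ) else 0)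
      = (Fintype.card Q : ℝ) ^ (d - 1) := by
  classical
  rw [← (splitEquiv Q i₀).sum_comp, Fintype.sum_prod_type]
  have hw : ∀ (s : Q) (r : {j : Fin d // j ≠ i₀} → Q) (H : Fin d → Q → Q),
      (∑ i, H i ((splitEquiv Q i₀) (s, r) i))
        = H i₀ s + ∑ j : {j : Fin d // j ≠ i₀}, H j.1 (r j) := by
    intro s r H
    rw [sum_split i₀]
    congr 1
    · simp [splitEquiv]
    · apply Finset.sum_congr rfl
      intro j _
      congr 1
      simp [splitEquiv, dif_neg j.2]
  have key : ∀ (s : Q) (r : {j : Fin d // j ≠ i₀} → Q),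
      ((∑ i, F i ((splitEquiv Q i₀) (s, r) i)) = (∑ i, G i ((splitEquiv Q i₀) (s, r) i)) + c)
        ↔ (F i₀ s = G i₀ s +
            ((∑ j : {j : Fin d // j ≠ i₀}, G j.1 (r j)) + c
              - ∑ j : {j : Fin d // j ≠ i₀}, F j.1 (r j))) := by
    intro s r
    rw [hw s r F, hw s r G]
    constructor
    · intro hh
      rw [← sub_eq_zero] at hh ⊢; rw [← hh]; abel
    · intro hh
      rw [← sub_eq_zero] at hh ⊢; rw [← hh]; abel
  rw [Finset.sum_comm]
  have : ∀ r : {j : Fin d // j ≠ i₀} → Q,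
      (∑ s : Q, if (∑ i, F i ((splitEquiv Q i₀) (s, r) i))
          = (∑ i, G i ((splitEquiv Q i₀) (s, r) i)) + c then (1:ℝ) else 0) = 1 := by
    intro r
    simp only [key]
    exact sum_ite_of_existsUnique _ (h _)
  rw [Finset.sum_congr rfl (fun r _ => this r)]
  have hcard : Fintype.card {j : Fin d // j ≠ i₀} = d - 1 := by
    simp [Fintype.card_subtype_compl]
  simp [Finset.card_univ, Fintype.card_fun, hcard]

end Helpers


section Facts
set_option linter.unusedSectionVars false
variable {Q : Type*} [Quasifield Q] [Fintype Q] [DecidableEq Q]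
open Finset

lemma qf_sum_indicator_pair (a : Q) (P : Prop) [Decidable P] :
    ∑ t : Q, (if (t = a ∧ P) then (1:ℝ) else 0) = if P then 1 else 0 := by
  by_cases hP : P
  · simp [hP]
  · simp [hP]

lemma fact_NNt {d : ℕ} (γ : Q) (x x' : Fin (d+1) → Q) :
    ∑ y : Fin (d+1) → Q, (DPBlock Q d γ x y) * (DPBlock Q d γ x' y) =
      if x = x' then (Fintype.card Q : ℝ)^d else
        if Fin.init x = Fin.init x' then 0 else (Fintype.card Q : ℝ)^(d-1) := by
  classical
  have hprod : ∀ y, (DPBlock Q d γ x y) * (DPBlock Q d γ x' y)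
      = if (DPAdj d γ x y ∧ DPAdj d γ x' y) then (1:ℝ) else 0 := by
    intro y
    by_cases h1 : DPAdj d γ x y <;> by_cases h2 : DPAdj d γ x' y <;>
      simp [DPBlock, h1, h2]
  simp only [hprod]
  rw [sum_snoc]
  have step : ∀ w : Fin d → Q,
      (∑ t : Q, if (DPAdj d γ x (Fin.snoc w t) ∧ DPAdj d γ x' (Fin.snoc w t))
          then (1:ℝ) else 0)
        = if (∑ i, x i.castSucc * w i) = (∑ i, x' i.castSucc * w i)
            + (x (Fin.last d) - x' (Fin.last d)) then 1 else 0 := by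
    intro w
    have hadj : ∀ t : Q, (DPAdj d γ x (Fin.snoc w t) ∧ DPAdj d γ x' (Fin.snoc w t))
        ↔ (t = x (Fin.last d) + γ - (∑ i, x i.castSucc * w i)
            ∧ (∑ i, x i.castSucc * w i) = (∑ i, x' i.castSucc * w i)
                + (x (Fin.last d) - x' (Fin.last d))) := by
      intro t
      simp only [DPAdj, Fin.snoc_castSucc, Fin.snoc_last]
      constructor
      · rintro ⟨h1, h2⟩
        have ht : t = x (Fin.last d) + γ - (∑ i, x i.castSucc * w i) := by
          refine eq_sub_of_add_eq ?_
          rw [add_comm]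
          exact h1.symm
        refine ⟨ht, ?_⟩
        subst ht
        rw [← sub_eq_zero] at h2 ⊢; rw [← h2]; abel
      · rintro ⟨ht, hC⟩
        subst ht
        constructor
        · abel
        · rw [← sub_eq_zero] at hC ⊢; rw [← hC]; abel
    simp only [hadj]
    exact qf_sum_indicator_pair _ _
  rw [Finset.sum_congr rfl (fun w _ => step w)]
  by_cases hE : Fin.init x = Fin.init x'
  · have hS : ∀ (w : Fin d → Q), (∑ i, x i.castSucc * w i) = ∑ i, x' i.castSucc * w i := by
      intro w
      refine Finset.sum_congr rfl fun i _ => ?_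
      have : x i.castSucc = x' i.castSucc := congrFun hE i
      rw [this]
    by_cases hl : x (Fin.last d) = x' (Fin.last d)
    · have hxx : x = x' := by
        funext i
        refine Fin.lastCases hl (fun j => ?_) i
        exact congrFun hE j
      rw [if_pos hxx]
      have : ∀ w : Fin d → Q, ((∑ i, x i.castSucc * w i) = (∑ i, x' i.castSucc * w i)
            + (x (Fin.last d) - x' (Fin.last d))) := by
        intro w
        rw [hS w, hl, sub_self, add_zero]
      simp only [this, if_true]
      simp [Finset.card_univ, Fintype.card_fun]
    · have hxx : x ≠ x' := fun h => hl (by rw [h])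
      rw [if_neg hxx, if_pos hE]
      have : ∀ w : Fin d → Q, ¬((∑ i, x i.castSucc * w i) = (∑ i, x' i.castSucc * w i)
            + (x (Fin.last d) - x' (Fin.last d))) := by
        intro w
        rw [hS w, left_eq_add, sub_eq_zero]
        exact hl
      simp [this]
  · obtain ⟨i₀, hi₀⟩ : ∃ i : Fin d, x i.castSucc ≠ x' i.castSucc := by
      by_contra hc
      push_neg at hc
      exact hE (funext fun i => hc i)
    have hxx : x ≠ x' := fun h => hE (by rw [h])
    rw [if_neg hxx, if_neg hE]
    exact count_core i₀ (fun i s => x i.castSucc * s) (fun i s => x' i.castSucc * s) _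
      (fun c' => Quasifield.existsUnique_affine _ _ c' hi₀)


lemma qf_existsUnique_affine_right (a b : Q) (h : a ≠ b) (c : Q) :
    ∃! x : Q, x * a = x * b + c := by
  have hu := qf_existsUnique_right (a - b) (sub_ne_zero.mpr h) c
  have hiff : ∀ x : Q, (x * a = x * b + c) ↔ x * (a - b) = c := by
    intro x
    rw [qf_mul_sub, sub_eq_iff_eq_add, add_comm]
  obtain ⟨s, hs, hu'⟩ := hu
  exact ⟨s, (hiff s).mpr hs, fun z hz => hu' z ((hiff z).mp hz)⟩

lemma fact_NtN {d : ℕ} (γ : Q) (y y' : Fin (d+1) → Q) :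
    ∑ x : Fin (d+1) → Q, (DPBlock Q d γ x y) * (DPBlock Q d γ x y') =
      if y = y' then (Fintype.card Q : ℝ)^d else
        if Fin.init y = Fin.init y' then 0 else (Fintype.card Q : ℝ)^(d-1) := by
  classical
  have hprod : ∀ x, (DPBlock Q d γ x y) * (DPBlock Q d γ x y')
      = if (DPAdj d γ x y ∧ DPAdj d γ x y') then (1:ℝ) else 0 := by
    intro x
    by_cases h1 : DPAdj d γ x y <;> by_cases h2 : DPAdj d γ x y' <;>
      simp [DPBlock, h1, h2]
  simp only [hprod]
  rw [sum_snoc]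
  have step : ∀ w : Fin d → Q,
      (∑ t : Q, if (DPAdj d γ (Fin.snoc w t) y ∧ DPAdj d γ (Fin.snoc w t) y')
          then (1:ℝ) else 0)
        = if (∑ i, w i * y i.castSucc) = (∑ i, w i * y' i.castSucc)
            + (y' (Fin.last d) - y (Fin.last d)) then 1 else 0 := by
    intro w
    have hadj : ∀ t : Q, (DPAdj d γ (Fin.snoc w t) y ∧ DPAdj d γ (Fin.snoc w t) y')
        ↔ (t = ((∑ i, w i * y i.castSucc) + y (Fin.last d)) - γ
            ∧ (∑ i, w i * y i.castSucc) = (∑ i, w i * y' i.castSucc)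
                + (y' (Fin.last d) - y (Fin.last d))) := by
      intro t
      simp only [DPAdj, Fin.snoc_castSucc, Fin.snoc_last]
      constructor
      · rintro ⟨h1, h2⟩
        have ht : t = ((∑ i, w i * y i.castSucc) + y (Fin.last d)) - γ :=
          eq_sub_of_add_eq h1
        refine ⟨ht, ?_⟩
        subst ht
        rw [← sub_eq_zero] at h2 ⊢; rw [← h2]; abel
      · rintro ⟨ht, hC⟩
        subst ht
        constructor
        · abel
        · rw [← sub_eq_zero] at hC ⊢; rw [← hC]; abel
    simp only [hadj]
    exact qf_sum_indicator_pair _ _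
  rw [Finset.sum_congr rfl (fun w _ => step w)]
  by_cases hE : Fin.init y = Fin.init y'
  · have hS : ∀ (w : Fin d → Q), (∑ i, w i * y i.castSucc) = ∑ i, w i * y' i.castSucc := by
      intro w
      refine Finset.sum_congr rfl fun i _ => ?_
      have : y i.castSucc = y' i.castSucc := congrFun hE i
      rw [this]
    by_cases hl : y (Fin.last d) = y' (Fin.last d)
    · have hyy : y = y' := by
        funext i
        refine Fin.lastCases hl (fun j => ?_) i
        exact congrFun hE j
      rw [if_pos hyy]
      have : ∀ w : Fin d → Q, ((∑ i, w i * y i.castSucc) = (∑ i, w i * y' i.castSucc)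
            + (y' (Fin.last d) - y (Fin.last d))) := by
        intro w
        rw [hS w, hl, sub_self, add_zero]
      simp only [this, if_true]
      simp [Finset.card_univ, Fintype.card_fun]
    · have hyy : y ≠ y' := fun h => hl (by rw [h])
      rw [if_neg hyy, if_pos hE]
      have : ∀ w : Fin d → Q, ¬((∑ i, w i * y i.castSucc) = (∑ i, w i * y' i.castSucc)
            + (y' (Fin.last d) - y (Fin.last d))) := by
        intro w
        rw [hS w, left_eq_add, sub_eq_zero]
        exact fun h => hl h.symm
      simp [this]
  · obtain ⟨i₀, hi₀⟩ : ∃ i : Fin d, y i.castSucc ≠ y' i.castSucc := by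
      by_contra hc
      push_neg at hc
      exact hE (funext fun i => hc i)
    have hyy : y ≠ y' := fun h => hE (by rw [h])
    rw [if_neg hyy, if_neg hE]
    exact count_core i₀ (fun i s => s * y i.castSucc) (fun i s => s * y' i.castSucc) _
      (fun c' => qf_existsUnique_affine_right _ _ hi₀ c')

lemma fact2_X {d : ℕ} (γ : Q) (p y : Fin (d+1) → Q) :
    ∑ x' : Fin (d+1) → Q,
      (if Fin.init x' = Fin.init p then DPBlock Q d γ x' y else 0) = 1 := by
  classical
  rw [sum_snoc]
  have h1 : ∀ (w : Fin d → Q) (t : Q),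
      (if Fin.init (Fin.snoc w t : Fin (d+1) → Q) = Fin.init p then DPBlock Q d γ (Fin.snoc w t) y else 0)
        = if w = Fin.init p then DPBlock Q d γ (Fin.snoc w t) y else 0 := by
    intro w t
    simp only [Fin.init_snoc]
  simp only [h1]
  have h2 : ∀ w : Fin d → Q,
      (∑ t : Q, if w = Fin.init p then DPBlock Q d γ (Fin.snoc w t) y else 0)
        = if w = Fin.init p then (∑ t : Q, DPBlock Q d γ (Fin.snoc w t) y) else 0 := by
    intro w
    split_ifs <;> simp
  simp only [h2]
  rw [Finset.sum_ite_eq' Finset.univ (Fin.init p)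
    (fun w => ∑ t : Q, DPBlock Q d γ (Fin.snoc w t) y), if_pos (Finset.mem_univ _)]
  have h3 : ∀ t : Q, DPBlock Q d γ (Fin.snoc (Fin.init p) t) y
      = if (t + γ = (∑ i, Fin.init p i * y i.castSucc) + y (Fin.last d)) then (1:ℝ) else 0 := by
    intro t
    simp [DPBlock, DPAdj, Fin.snoc_castSucc, Fin.snoc_last]
  simp only [h3]
  apply sum_ite_of_existsUnique
  refine ⟨((∑ i, Fin.init p i * y i.castSucc) + y (Fin.last d)) - γ, by abel, fun z hz => eq_sub_of_add_eq hz⟩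

lemma fact2_Y {d : ℕ} (γ : Q) (p x : Fin (d+1) → Q) :
    ∑ y' : Fin (d+1) → Q,
      (if Fin.init y' = Fin.init p then DPBlock Q d γ x y' else 0) = 1 := by
  classical
  rw [sum_snoc]
  have h1 : ∀ (w : Fin d → Q) (t : Q),
      (if Fin.init (Fin.snoc w t : Fin (d+1) → Q) = Fin.init p then DPBlock Q d γ x (Fin.snoc w t) else 0)
        = if w = Fin.init p then DPBlock Q d γ x (Fin.snoc w t) else 0 := by
    intro w t
    simp only [Fin.init_snoc]
  simp only [h1]
  have h2 : ∀ w : Fin d → Q,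
      (∑ t : Q, if w = Fin.init p then DPBlock Q d γ x (Fin.snoc w t) else 0)
        = if w = Fin.init p then (∑ t : Q, DPBlock Q d γ x (Fin.snoc w t)) else 0 := by
    intro w
    split_ifs <;> simp
  simp only [h2]
  rw [Finset.sum_ite_eq' Finset.univ (Fin.init p)
    (fun w => ∑ t : Q, DPBlock Q d γ x (Fin.snoc w t)), if_pos (Finset.mem_univ _)]
  have h3 : ∀ t : Q, DPBlock Q d γ x (Fin.snoc (Fin.init p) t)
      = if (x (Fin.last d) + γ = (∑ i, x i.castSucc * Fin.init p i) + t) then (1:ℝ) else 0 := by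
    intro t
    simp [DPBlock, DPAdj, Fin.snoc_castSucc, Fin.snoc_last]
  simp only [h3]
  apply sum_ite_of_existsUnique
  refine ⟨(x (Fin.last d) + γ) - (∑ i, x i.castSucc * Fin.init p i), by abel, fun z hz => ?_⟩
  have hz' : z + (∑ i, x i.castSucc * Fin.init p i) = x (Fin.last d) + γ := by
    rw [add_comm]
    exact hz.symm
  exact eq_sub_of_add_eq hz'


end Facts

/-- Lemma 4.2: if `v` is a (nonzero) eigenvector of the adjacency matrix
`M = [[0,N],[Nᵀ,0]]` of `DP_Q(d,γ)` with eigenvalue `lam`, and `v` is orthogonal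
to both `χ_X + χ_Y` and `χ_X - χ_Y`, then `lam³ = q^d·lam`; in particular
`|lam| ≤ q^{d/2}`. -/
theorem stmt_18 {Q : Type*} [Quasifield Q] [Fintype Q] [DecidableEq Q]
    (d : ℕ) (hd : 1 ≤ d) (γ : Q)
    (v : ((Fin (d + 1) → Q) ⊕ (Fin (d + 1) → Q)) → ℝ) (hv : v ≠ 0) (lam : ℝ)
    (heig : (Matrix.fromBlocks 0 (DPBlock Q d γ) (DPBlock Q d γ)ᵀ 0).mulVec v = lam • v)
    (horth₁ : dotProduct
      ((Sum.elim (fun _ => (1 : ℝ)) (fun _ => 0)) + (Sum.elim (fun _ => (0 : ℝ)) (fun _ => 1)))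
      v = 0)
    (horth₂ : dotProduct
      ((Sum.elim (fun _ => (1 : ℝ)) (fun _ => 0)) - (Sum.elim (fun _ => (0 : ℝ)) (fun _ => 1)))
      v = 0) :
    lam ^ 3 = (Fintype.card Q : ℝ) ^ d * lam ∧
      |lam| ≤ (Fintype.card Q : ℝ) ^ ((d : ℝ) / 2) := by
  classical
  have hX : ∀ x, (∑ y, DPBlock Q d γ x y * v (Sum.inr y)) = lam * v (Sum.inl x) := by
    intro x
    have h := congrFun heig (Sum.inl x)
    simpa [Matrix.mulVec, dotProduct, Fintype.sum_sum_type,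
      Matrix.fromBlocks_apply₁₁, Matrix.fromBlocks_apply₁₂] using h
  have hY : ∀ y, (∑ x, DPBlock Q d γ x y * v (Sum.inl x)) = lam * v (Sum.inr y) := by
    intro y
    have h := congrFun heig (Sum.inr y)
    simpa [Matrix.mulVec, dotProduct, Fintype.sum_sum_type,
      Matrix.fromBlocks_apply₂₁, Matrix.fromBlocks_apply₂₂, Matrix.transpose_apply] using h
  have hSX : (∑ x, v (Sum.inl x)) = 0 := by
    have h1 : (∑ x, v (Sum.inl x)) + (∑ y, v (Sum.inr y)) = 0 := by
      simpa [dotProduct, Fintype.sum_sum_type] using horth₁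
    have h2 : (∑ x, v (Sum.inl x)) - (∑ y, v (Sum.inr y)) = 0 := by
      simpa [dotProduct, Fintype.sum_sum_type, sub_mul] using horth₂
    linarith
  have hSY : (∑ y, v (Sum.inr y)) = 0 := by
    have h1 : (∑ x, v (Sum.inl x)) + (∑ y, v (Sum.inr y)) = 0 := by
      simpa [dotProduct, Fintype.sum_sum_type] using horth₁
    linarith [hSX]
  -- X side
  have keyX : ∀ x, lam ^ 3 * v (Sum.inl x)
      = (Fintype.card Q : ℝ) ^ d * (lam * v (Sum.inl x)) := by
    intro x
    have e1 : lam ^ 2 * v (Sum.inl x)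
        = ∑ x', (∑ y, DPBlock Q d γ x y * DPBlock Q d γ x' y) * v (Sum.inl x') := by
      have h0 : lam ^ 2 * v (Sum.inl x) = lam * (lam * v (Sum.inl x)) := by ring
      rw [h0, ← hX x, Finset.mul_sum]
      rw [Finset.sum_congr rfl (fun y _ => show
        lam * (DPBlock Q d γ x y * v (Sum.inr y))
          = DPBlock Q d γ x y * (lam * v (Sum.inr y)) from by ring)]
      rw [Finset.sum_congr rfl (fun y _ => by rw [← hY y])]
      rw [Finset.sum_congr rfl (fun y _ => Finset.mul_sum _ _ _)]
      rw [Finset.sum_comm]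
      refine Finset.sum_congr rfl fun x' _ => ?_
      rw [Finset.sum_mul]
      exact Finset.sum_congr rfl fun y _ => by ring
    have expand : ∀ x' : Fin (d+1) → Q,
        (∑ y, DPBlock Q d γ x y * DPBlock Q d γ x' y) * v (Sum.inl x')
          = ((Fintype.card Q : ℝ) ^ (d-1) * v (Sum.inl x')
              - (Fintype.card Q : ℝ) ^ (d-1)
                  * (if Fin.init x' = Fin.init x then v (Sum.inl x') else 0))
            + (if x' = x then (Fintype.card Q : ℝ) ^ d * v (Sum.inl x') else 0) := by
      intro x'
      rw [fact_NNt]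
      by_cases h1 : x' = x
      · subst h1
        simp only [eq_self_iff_true, if_true]
        ring
      · by_cases h2 : Fin.init x' = Fin.init x
        · rw [if_neg (fun h => h1 h.symm), if_pos h2.symm, if_pos h2, if_neg h1]
          ring
        · rw [if_neg (fun h => h1 h.symm), if_neg (fun h => h2 h.symm), if_neg h2, if_neg h1]
          ring
    have e2 : lam ^ 2 * v (Sum.inl x)
        = (Fintype.card Q : ℝ) ^ d * v (Sum.inl x)
          - (Fintype.card Q : ℝ) ^ (d-1)
              * ∑ x', (if Fin.init x' = Fin.init x then v (Sum.inl x') else 0) := by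
      rw [e1, Finset.sum_congr rfl (fun x' _ => expand x')]
      rw [Finset.sum_add_distrib, Finset.sum_sub_distrib, ← Finset.mul_sum, ← Finset.mul_sum,
        Finset.sum_ite_eq' Finset.univ x
          (fun x' => (Fintype.card Q : ℝ) ^ d * v (Sum.inl x')),
        if_pos (Finset.mem_univ x), hSX]
      ring
    have hB : lam * (∑ x', if Fin.init x' = Fin.init x then v (Sum.inl x') else 0) = 0 := by
      rw [Finset.mul_sum]
      rw [Finset.sum_congr rfl (fun x' _ => show
        lam * (if Fin.init x' = Fin.init x then v (Sum.inl x') else 0)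
          = (if Fin.init x' = Fin.init x then lam * v (Sum.inl x') else 0) from by
        split_ifs <;> simp)]
      rw [Finset.sum_congr rfl (fun x' _ => show
        (if Fin.init x' = Fin.init x then lam * v (Sum.inl x') else 0)
          = (if Fin.init x' = Fin.init x
              then (∑ y, DPBlock Q d γ x' y * v (Sum.inr y)) else 0) from by
        rw [hX x'])]
      rw [Finset.sum_congr rfl (fun x' _ => show
        (if Fin.init x' = Fin.init x
            then (∑ y, DPBlock Q d γ x' y * v (Sum.inr y)) else 0)
          = ∑ y, (if Fin.init x' = Fin.init x then DPBlock Q d γ x' y else 0) * v (Sum.inr y)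
          from by split_ifs <;> simp)]
      rw [Finset.sum_comm]
      rw [Finset.sum_congr rfl (fun y _ => by rw [← Finset.sum_mul, fact2_X, one_mul])]
      exact hSY
    calc lam ^ 3 * v (Sum.inl x) = lam * (lam ^ 2 * v (Sum.inl x)) := by ring
      _ = lam * ((Fintype.card Q : ℝ) ^ d * v (Sum.inl x)
            - (Fintype.card Q : ℝ) ^ (d-1)
                * ∑ x', (if Fin.init x' = Fin.init x then v (Sum.inl x') else 0)) := by
          rw [e2]
      _ = (Fintype.card Q : ℝ) ^ d * (lam * v (Sum.inl x))
            - (Fintype.card Q : ℝ) ^ (d-1)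
                * (lam * ∑ x', (if Fin.init x' = Fin.init x then v (Sum.inl x') else 0)) := by
          ring
      _ = (Fintype.card Q : ℝ) ^ d * (lam * v (Sum.inl x)) := by rw [hB]; ring
  -- Y side
  have keyY : ∀ y, lam ^ 3 * v (Sum.inr y)
      = (Fintype.card Q : ℝ) ^ d * (lam * v (Sum.inr y)) := by
    intro y
    have e1 : lam ^ 2 * v (Sum.inr y)
        = ∑ y', (∑ x, DPBlock Q d γ x y * DPBlock Q d γ x y') * v (Sum.inr y') := by
      have h0 : lam ^ 2 * v (Sum.inr y) = lam * (lam * v (Sum.inr y)) := by ring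
      rw [h0, ← hY y, Finset.mul_sum]
      rw [Finset.sum_congr rfl (fun x _ => show
        lam * (DPBlock Q d γ x y * v (Sum.inl x))
          = DPBlock Q d γ x y * (lam * v (Sum.inl x)) from by ring)]
      rw [Finset.sum_congr rfl (fun x _ => by rw [← hX x])]
      rw [Finset.sum_congr rfl (fun x _ => Finset.mul_sum _ _ _)]
      rw [Finset.sum_comm]
      refine Finset.sum_congr rfl fun y' _ => ?_
      rw [Finset.sum_mul]
      exact Finset.sum_congr rfl fun x _ => by ring
    have expand : ∀ y' : Fin (d+1) → Q,
        (∑ x, DPBlock Q d γ x y * DPBlock Q d γ x y') * v (Sum.inr y')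
          = ((Fintype.card Q : ℝ) ^ (d-1) * v (Sum.inr y')
              - (Fintype.card Q : ℝ) ^ (d-1)
                  * (if Fin.init y' = Fin.init y then v (Sum.inr y') else 0))
            + (if y' = y then (Fintype.card Q : ℝ) ^ d * v (Sum.inr y') else 0) := by
      intro y'
      rw [fact_NtN]
      by_cases h1 : y' = y
      · subst h1
        simp only [eq_self_iff_true, if_true]
        ring
      · by_cases h2 : Fin.init y' = Fin.init y
        · rw [if_neg (fun h => h1 h.symm), if_pos h2.symm, if_pos h2, if_neg h1]
          ring
        · rw [if_neg (fun h => h1 h.symm), if_neg (fun h => h2 h.symm), if_neg h2, if_neg h1]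
          ring
    have e2 : lam ^ 2 * v (Sum.inr y)
        = (Fintype.card Q : ℝ) ^ d * v (Sum.inr y)
          - (Fintype.card Q : ℝ) ^ (d-1)
              * ∑ y', (if Fin.init y' = Fin.init y then v (Sum.inr y') else 0) := by
      rw [e1, Finset.sum_congr rfl (fun y' _ => expand y')]
      rw [Finset.sum_add_distrib, Finset.sum_sub_distrib, ← Finset.mul_sum, ← Finset.mul_sum,
        Finset.sum_ite_eq' Finset.univ y
          (fun y' => (Fintype.card Q : ℝ) ^ d * v (Sum.inr y')),
        if_pos (Finset.mem_univ y), hSY]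
      ring
    have hB : lam * (∑ y', if Fin.init y' = Fin.init y then v (Sum.inr y') else 0) = 0 := by
      rw [Finset.mul_sum]
      rw [Finset.sum_congr rfl (fun y' _ => show
        lam * (if Fin.init y' = Fin.init y then v (Sum.inr y') else 0)
          = (if Fin.init y' = Fin.init y then lam * v (Sum.inr y') else 0) from by
        split_ifs <;> simp)]
      rw [Finset.sum_congr rfl (fun y' _ => show
        (if Fin.init y' = Fin.init y then lam * v (Sum.inr y') else 0)
          = (if Fin.init y' = Fin.init y
              then (∑ x, DPBlock Q d γ x y' * v (Sum.inl x)) else 0) from by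
        rw [hY y'])]
      rw [Finset.sum_congr rfl (fun y' _ => show
        (if Fin.init y' = Fin.init y
            then (∑ x, DPBlock Q d γ x y' * v (Sum.inl x)) else 0)
          = ∑ x, (if Fin.init y' = Fin.init y then DPBlock Q d γ x y' else 0) * v (Sum.inl x)
          from by split_ifs <;> simp)]
      rw [Finset.sum_comm]
      rw [Finset.sum_congr rfl (fun x _ => by rw [← Finset.sum_mul, fact2_Y, one_mul])]
      exact hSX
    calc lam ^ 3 * v (Sum.inr y) = lam * (lam ^ 2 * v (Sum.inr y)) := by ring
      _ = lam * ((Fintype.card Q : ℝ) ^ d * v (Sum.inr y)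
            - (Fintype.card Q : ℝ) ^ (d-1)
                * ∑ y', (if Fin.init y' = Fin.init y then v (Sum.inr y') else 0)) := by
          rw [e2]
      _ = (Fintype.card Q : ℝ) ^ d * (lam * v (Sum.inr y))
            - (Fintype.card Q : ℝ) ^ (d-1)
                * (lam * ∑ y', (if Fin.init y' = Fin.init y then v (Sum.inr y') else 0)) := by
          ring
      _ = (Fintype.card Q : ℝ) ^ d * (lam * v (Sum.inr y)) := by rw [hB]; ring
  -- conclude
  obtain ⟨z, hz⟩ : ∃ z, v z ≠ 0 := by
    by_contra h
    push_neg at h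
    exact hv (funext fun z => h z)
  have hlam3 : lam ^ 3 = (Fintype.card Q : ℝ) ^ d * lam := by
    have hz' : lam ^ 3 * v z = ((Fintype.card Q : ℝ) ^ d * lam) * v z := by
      cases z with
      | inl x => rw [keyX x]; ring
      | inr y => rw [keyY y]; ring
    exact mul_right_cancel₀ hz hz'
  refine ⟨hlam3, ?_⟩
  have hq0 : (0:ℝ) ≤ (Fintype.card Q : ℝ) := Nat.cast_nonneg _
  have hfac : lam * (lam ^ 2 - (Fintype.card Q : ℝ) ^ d) = 0 := by
    linear_combination hlam3
  have hrpow : (Fintype.card Q : ℝ) ^ ((d : ℝ) / 2)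
      = Real.sqrt ((Fintype.card Q : ℝ) ^ d) := by
    rw [Real.sqrt_eq_rpow, ← Real.rpow_natCast (Fintype.card Q : ℝ) d,
      ← Real.rpow_mul hq0]
    congr 1
    ring
  rcases mul_eq_zero.mp hfac with h0 | h1
  · rw [h0, abs_zero, hrpow]
    exact Real.sqrt_nonneg _
  · have h2 : lam ^ 2 = (Fintype.card Q : ℝ) ^ d := sub_eq_zero.mp h1
    have habs : |lam| = Real.sqrt ((Fintype.card Q : ℝ) ^ d) := by
      rw [← h2, Real.sqrt_sq_eq_abs]
    rw [habs, hrpow]
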